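/- arXiv:1808.01674 — 3 statements merged into one kernel-verified Lean document; each statement's English description precedes it below -/
import Mathlib

section
/- Let λ ∈ (1/2,1) and C > 0, and suppose that for every n ≥ 1 and all distinct η, η' ∈ {−1,1}^n the sums satisfy |Σ_{k<n} η_k λ^k − Σ_{k<n} η'_k λ^k| ≥ C/2^n. Then there exists a constant C₆ > 0 such that β_n(x) ≤ C₆·(2λ)^n for every x ∈ ℝ and every n ≥ 1. -/
open MeasureTheory Filter

noncomputable section

/-- The sign `±1` associated to a boolean digit. -/
def bsign (b : Bool) : ℝ := if b then 1 else -1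

/-- The canonical coding map `π(ω) = Σ_{k≥0} ω_k λ^k` of the Bernoulli convolution system,
where the digits `ω_k ∈ {-1,1}` are encoded by booleans. -/
def bcPi (lam : ℝ) (ω : ℕ → Bool) : ℝ := ∑' k : ℕ, bsign (ω k) * lam ^ k

/-- The finite signed sum `Σ_{k<n} η_k λ^k`. -/
def bcSum (lam : ℝ) {n : ℕ} (η : Fin n → Bool) : ℝ := ∑ k : Fin n, bsign (η k) * lam ^ (k : ℕ)

/-- `β_n(x)`: the number of `n`-tuples `η ∈ {-1,1}^n` with
`x ∈ φ_{η_0}∘…∘φ_{η_{n-1}}(I_λ)`, i.e. `|x − Σ_{k<n} η_k λ^k| ≤ λ^n/(1-λ)`. -/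
def bcBeta (lam : ℝ) (n : ℕ) (x : ℝ) : ℕ :=
  Set.ncard {η : Fin n → Bool | |x - bcSum lam η| ≤ lam ^ n / (1 - lam)}


/-- If all distinct signed sums `Σ_{k<n} η_k λ^k` are at least `C/2^n` apart, then
`β_n(x) ≤ C₆ (2λ)^n` for all `x` and all `n ≥ 1`. -/
theorem beta_upper_of_separation (lam C : ℝ) (hlam₁ : 1 / 2 < lam) (hlam₂ : lam < 1)
    (hC : 0 < C)
    (hsep : ∀ n : ℕ, 1 ≤ n → ∀ η η' : Fin n → Bool, η ≠ η' →
      C / 2 ^ n ≤ |bcSum lam η - bcSum lam η'|) :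
    ∃ C₆ : ℝ, 0 < C₆ ∧ ∀ (x : ℝ) (n : ℕ), 1 ≤ n →
      (bcBeta lam n x : ℝ) ≤ C₆ * (2 * lam) ^ n := by
  have hlam0 : 0 < lam := lt_trans (by norm_num) hlam₁
  have h1lam : 0 < 1 - lam := by linarith
  refine ⟨2 / ((1 - lam) * C) + 1, by positivity, fun x n hn => ?_⟩
  set δ : ℝ := C / 2 ^ n with hδdef
  have hδ : 0 < δ := by positivity
  set r : ℝ := lam ^ n / (1 - lam) with hrdef
  have hr : 0 < r := by positivity
  -- the set as a finset
  have hset : {η : Fin n → Bool | |x - bcSum lam η| ≤ r}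
      = ↑(Finset.univ.filter (fun η : Fin n → Bool => |x - bcSum lam η| ≤ r)) := by
    ext η; simp
  set S := Finset.univ.filter (fun η : Fin n → Bool => |x - bcSum lam η| ≤ r) with hS
  have hbeta : bcBeta lam n x = S.card := by
    rw [bcBeta, hset, Set.ncard_coe_finset]
  -- injective map into Finset.Icc 0 ⌊2r/δ⌋
  set M : ℤ := ⌊2 * r / δ⌋ with hM
  have hmap : ∀ η ∈ S, ⌊(bcSum lam η - (x - r)) / δ⌋ ∈ Finset.Icc (0 : ℤ) M := by
    intro η hη
    simp only [hS, Finset.mem_filter] at hη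
    have habs := abs_le.mp hη.2
    have h0 : 0 ≤ (bcSum lam η - (x - r)) / δ := by
      apply div_nonneg _ hδ.le; linarith [habs.2]
    have h1 : (bcSum lam η - (x - r)) / δ ≤ 2 * r / δ := by
      gcongr
      linarith [habs.1]
    simp only [Finset.mem_Icc]
    exact ⟨Int.floor_nonneg.mpr h0, Int.floor_le_floor h1⟩
  have hinj : ∀ η ∈ S, ∀ η' ∈ S,
      ⌊(bcSum lam η - (x - r)) / δ⌋ = ⌊(bcSum lam η' - (x - r)) / δ⌋ → η = η' := by
    intro η _ η' _ heq
    by_contra hne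
    have hs := hsep n hn η η' hne
    have habslt : |(bcSum lam η - (x - r)) / δ - (bcSum lam η' - (x - r)) / δ| < 1 :=
      Int.abs_sub_lt_one_of_floor_eq_floor heq
    rw [div_sub_div_same, show bcSum lam η - (x - r) - (bcSum lam η' - (x - r))
        = bcSum lam η - bcSum lam η' by ring, abs_div, abs_of_pos hδ,
        div_lt_one hδ] at habslt
    exact absurd hs (not_le.mpr habslt)
  have hcard : S.card ≤ (Finset.Icc (0 : ℤ) M).card :=
    Finset.card_le_card_of_injOn _ hmap hinj
  have hMcard : (Finset.Icc (0 : ℤ) M).card = (M + 1).toNat := by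
    rw [Int.card_Icc]; norm_num
  have hM0 : 0 ≤ M := Int.floor_nonneg.mpr (by positivity)
  have hfinal : (S.card : ℝ) ≤ 2 * r / δ + 1 := by
    calc (S.card : ℝ) ≤ ((M + 1).toNat : ℝ) := by
          exact_mod_cast hMcard ▸ hcard
      _ = (M : ℝ) + 1 := by
          have h := Int.toNat_of_nonneg (show (0:ℤ) ≤ M + 1 by linarith)
          exact_mod_cast congrArg (Int.cast : ℤ → ℝ) h
      _ ≤ 2 * r / δ + 1 := by
          have := Int.floor_le (2 * r / δ); linarith
  rw [hbeta]
  have hexp : 2 * r / δ = 2 / ((1 - lam) * C) * (2 * lam) ^ n := by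
    rw [hrdef, hδdef]
    field_simp
    ring
  have h2lam : (1 : ℝ) ≤ (2 * lam) ^ n := one_le_pow₀ (by linarith)
  calc (S.card : ℝ) ≤ 2 * r / δ + 1 := hfinal
    _ = 2 / ((1 - lam) * C) * (2 * lam) ^ n + 1 := by rw [hexp]
    _ ≤ 2 / ((1 - lam) * C) * (2 * lam) ^ n + 1 * (2 * lam) ^ n := by nlinarith
    _ = (2 / ((1 - lam) * C) + 1) * (2 * lam) ^ n := by ring

end
end

section
/- For every λ ∈ (0,1) and every n ≥ 1, one has ∫_{Σ₂⁺} log β_n(π(ω)) dμ⁺(ω) ≥ n·log 2 − log q_n(λ), where q_n(λ) = card{Σ_{k<n} η_k λ^k : η ∈ {−1,1}^n} is the number of distinct values of the signed polynomial sums of length n. -/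
open MeasureTheory Filter

noncomputable section

/-- `μ` is the fair-coin Bernoulli measure on `{-1,1}^ℕ`: every cylinder of length `n`
has measure `(1/2)^n`. -/
def IsFairBernoulli (μ : Measure (ℕ → Bool)) : Prop :=
  ∀ (n : ℕ) (η : Fin n → Bool), μ {ω | ∀ k : Fin n, ω (k : ℕ) = η k} = (1 / 2 : ENNReal) ^ n

/-! ### Auxiliary material -/

/-- The number of `η'` with the same signed sum as `η`. -/
def bcCnt (lam : ℝ) {n : ℕ} (η : Fin n → Bool) : ℕ :=
  (Finset.univ.filter fun η' : Fin n → Bool => bcSum lam η' = bcSum lam η).card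

lemma abs_bsign (b : Bool) : |bsign b| = 1 := by cases b <;> simp [bsign]

lemma bc_summable {lam : ℝ} (h₁ : 0 ≤ lam) (h₂ : lam < 1) (ω : ℕ → Bool) :
    Summable fun k => bsign (ω k) * lam ^ k := by
  apply Summable.of_norm_bounded (summable_geometric_of_lt_one h₁ h₂)
  intro k
  rw [Real.norm_eq_abs, abs_mul, abs_bsign, one_mul, abs_pow, abs_of_nonneg h₁]

lemma bc_tail {lam : ℝ} (h₁ : 0 ≤ lam) (h₂ : lam < 1) (n : ℕ) (ω : ℕ → Bool) :
    |bcPi lam ω - bcSum lam (fun k : Fin n => ω (k : ℕ))| ≤ lam ^ n / (1 - lam) := by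
  have hs := bc_summable h₁ h₂ ω
  have hsplit := hs.sum_add_tsum_nat_add n
  have hb : bcSum lam (fun k : Fin n => ω (k : ℕ)) =
      ∑ i ∈ Finset.range n, bsign (ω i) * lam ^ i :=
    Fin.sum_univ_eq_sum_range (fun i => bsign (ω i) * lam ^ i) n
  have hdiff : bcPi lam ω - bcSum lam (fun k : Fin n => ω (k : ℕ)) =
      ∑' i, bsign (ω (i + n)) * lam ^ (i + n) := by
    rw [bcPi, hb, ← hsplit]; ring
  rw [hdiff]
  have hs' : Summable fun i => bsign (ω (i + n)) * lam ^ (i + n) :=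
    (summable_nat_add_iff n).2 hs
  have hgeo : Summable fun i : ℕ => lam ^ (i + n) := by
    simpa using ((summable_geometric_of_lt_one h₁ h₂).mul_right (lam ^ n)).congr
      (fun i => by rw [← pow_add])
  calc |∑' i, bsign (ω (i + n)) * lam ^ (i + n)|
      ≤ ∑' i, |bsign (ω (i + n)) * lam ^ (i + n)| := by
        have h := norm_tsum_le_tsum_norm hs'.norm
        simpa only [Real.norm_eq_abs] using h
    _ = ∑' i : ℕ, lam ^ (i + n) := by
        congr 1; funext i
        rw [abs_mul, abs_bsign, one_mul, abs_pow, abs_of_nonneg h₁]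
    _ = lam ^ n / (1 - lam) := by
        have : ∀ i : ℕ, lam ^ (i + n) = lam ^ i * lam ^ n := fun i => pow_add lam i n
        rw [tsum_congr this, tsum_mul_right, tsum_geometric_of_lt_one h₁ h₂]
        rw [div_eq_mul_inv, mul_comm]

lemma bcBeta_eq (lam : ℝ) (n : ℕ) (x : ℝ) :
    bcBeta lam n x =
      (Finset.univ.filter fun η : Fin n → Bool =>
        |x - bcSum lam η| ≤ lam ^ n / (1 - lam)).card := by
  rw [bcBeta, ← Set.ncard_coe_finset]
  congr 1
  ext η
  simp

lemma bcCnt_le_beta {lam : ℝ} {n : ℕ} {x : ℝ} (η : Fin n → Bool)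
    (h : |x - bcSum lam η| ≤ lam ^ n / (1 - lam)) :
    bcCnt lam η ≤ bcBeta lam n x := by
  rw [bcBeta_eq]
  apply Finset.card_le_card
  intro η' hη'
  simp only [Finset.mem_filter, Finset.mem_univ, true_and] at *
  rw [hη']
  exact h

lemma one_le_bcCnt (lam : ℝ) {n : ℕ} (η : Fin n → Bool) : 1 ≤ bcCnt lam η := by
  rw [bcCnt, Nat.one_le_iff_ne_zero, ← Nat.pos_iff_ne_zero, Finset.card_pos]
  exact ⟨η, by simp⟩

lemma bcBeta_le (lam : ℝ) (n : ℕ) (x : ℝ) : bcBeta lam n x ≤ 2 ^ n := by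
  rw [bcBeta_eq]
  calc _ ≤ (Finset.univ : Finset (Fin n → Bool)).card := Finset.card_le_card (Finset.filter_subset _ _)
    _ = 2 ^ n := by simp [Finset.card_univ]

/-- The convexity/counting step: the average of `log (bcCnt η)` is at least
`n log 2 - log q`. -/
lemma sum_log_bcCnt (lam : ℝ) (n : ℕ) :
    (2 : ℝ) ^ n * ((n : ℝ) * Real.log 2 -
        Real.log ((Finset.image (bcSum lam) (Finset.univ : Finset (Fin n → Bool))).card)) ≤
      ∑ η : Fin n → Bool, Real.log (bcCnt lam η) := by
  classical
  set V := Finset.image (bcSum lam) (Finset.univ : Finset (Fin n → Bool)) with hV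
  set m : ℝ → ℕ := fun v => (Finset.univ.filter fun η : Fin n → Bool => bcSum lam η = v).card
    with hm
  have hqpos : 0 < V.card :=
    Finset.card_pos.2 (Finset.Nonempty.image Finset.univ_nonempty _)
  set qr : ℝ := (V.card : ℝ) with hqr
  have hqr0 : 0 < qr := by rw [hqr]; exact_mod_cast hqpos
  -- total mass
  have hsum_m : ∑ v ∈ V, (m v : ℝ) = 2 ^ n := by
    have := Finset.card_eq_sum_card_fiberwise
      (f := bcSum lam) (s := (Finset.univ : Finset (Fin n → Bool))) (t := V)
      (fun η _ => Finset.mem_image_of_mem _ (Finset.mem_univ η))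
    have hcard : (Finset.univ : Finset (Fin n → Bool)).card = 2 ^ n := by
      simp [Finset.card_univ]
    rw [hcard] at this
    exact_mod_cast this.symm
  -- fiberwise rewriting
  have hfib : ∑ η : Fin n → Bool, Real.log (bcCnt lam η)
      = ∑ v ∈ V, (m v : ℝ) * Real.log (m v) := by
    rw [← Finset.sum_fiberwise_of_maps_to (g := bcSum lam) (t := V)
      (fun η _ => Finset.mem_image_of_mem (bcSum lam) (Finset.mem_univ η))
      (fun η : Fin n → Bool => Real.log (bcCnt lam η))]
    apply Finset.sum_congr rfl
    intro v _
    have hcnt : ∀ η ∈ Finset.univ.filter fun η : Fin n → Bool => bcSum lam η = v,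
        Real.log (bcCnt lam η) = Real.log (m v) := by
      intro η hη
      have hv : bcSum lam η = v := (Finset.mem_filter.1 hη).2
      simp only [bcCnt, hm, hv]
    rw [Finset.sum_congr rfl hcnt, Finset.sum_const, nsmul_eq_mul]
  -- Jensen
  have hjen := Real.convexOn_mul_log.map_sum_le (t := V) (w := fun _ => qr⁻¹)
    (p := fun v => (m v : ℝ)) (fun _ _ => by positivity)
    (by rw [Finset.sum_const, nsmul_eq_mul]; field_simp; exact hqr.symm)
    (fun v _ => Set.mem_Ici.2 (by positivity))
  simp only [smul_eq_mul] at hjen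
  have hlhs : ∑ v ∈ V, qr⁻¹ * (m v : ℝ) = qr⁻¹ * 2 ^ n := by
    rw [← Finset.mul_sum, hsum_m]
  rw [hlhs] at hjen
  have hrhs : ∑ v ∈ V, qr⁻¹ * ((m v : ℝ) * Real.log (m v))
      = qr⁻¹ * ∑ v ∈ V, (m v : ℝ) * Real.log (m v) := by
    rw [← Finset.mul_sum]
  rw [hrhs] at hjen
  have hmul := mul_le_mul_of_nonneg_left hjen (le_of_lt hqr0)
  have h2n : (0:ℝ) < 2 ^ n := by positivity
  have hlog : Real.log (qr⁻¹ * 2 ^ n) = (n : ℝ) * Real.log 2 - Real.log qr := by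
    rw [Real.log_mul (by positivity) (ne_of_gt h2n), Real.log_inv, Real.log_pow]
    push_cast; ring
  calc (2:ℝ) ^ n * ((n : ℝ) * Real.log 2 - Real.log qr)
      = qr * (qr⁻¹ * 2 ^ n * Real.log (qr⁻¹ * 2 ^ n)) := by
        rw [hlog]; field_simp
    _ ≤ qr * (qr⁻¹ * ∑ v ∈ V, (m v : ℝ) * Real.log (m v)) := hmul
    _ = ∑ v ∈ V, (m v : ℝ) * Real.log (m v) := by field_simp
    _ = ∑ η : Fin n → Bool, Real.log (bcCnt lam η) := hfib.symm


/-- For every `λ ∈ (0,1)` and `n ≥ 1`,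
`∫ log β_n(π ω) dμ⁺(ω) ≥ n log 2 − log q_n(λ)`, where `q_n(λ)` is the number of distinct
values of the signed sums `Σ_{k<n} η_k λ^k`, `η ∈ {-1,1}^n`. -/
theorem integral_log_beta_ge (lam : ℝ) (hlam₁ : 0 < lam) (hlam₂ : lam < 1)
    (μ : Measure (ℕ → Bool)) [IsProbabilityMeasure μ] (hμ : IsFairBernoulli μ)
    (n : ℕ) (hn : 1 ≤ n) :
    (n : ℝ) * Real.log 2 -
        Real.log (Set.ncard {y : ℝ | ∃ η : Fin n → Bool, bcSum lam η = y}) ≤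
      ∫ ω, Real.log (bcBeta lam n (bcPi lam ω)) ∂μ := by
  classical
  have hlam₀ : (0:ℝ) ≤ lam := le_of_lt hlam₁
  -- rewrite the cardinality as a Finset card
  have hset : {y : ℝ | ∃ η : Fin n → Bool, bcSum lam η = y}
      = (↑(Finset.image (bcSum lam) (Finset.univ : Finset (Fin n → Bool))) : Set ℝ) := by
    ext y; simp [eq_comm]
  rw [hset, Set.ncard_coe_finset]
  -- cylinders
  set C : (Fin n → Bool) → Set (ℕ → Bool) :=
    fun η => {ω | ∀ k : Fin n, ω (k : ℕ) = η k} with hC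
  have hCmeas : ∀ η, MeasurableSet (C η) := by
    intro η
    have : C η = ⋂ k : Fin n, (fun ω : ℕ → Bool => ω (k : ℕ)) ⁻¹' {η k} := by
      ext ω; simp [hC]
    rw [this]
    exact MeasurableSet.iInter fun k => (measurable_pi_apply _) (measurableSet_singleton _)
  -- the lower comparison function
  set g : (ℕ → Bool) → ℝ := fun ω => Real.log (bcCnt lam (fun k : Fin n => ω (k : ℕ)))
    with hg
  have hg_eq : ∀ ω, g ω
      = ∑ η : Fin n → Bool, (C η).indicator (fun _ => Real.log (bcCnt lam η)) ω := by
    intro ω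
    rw [Finset.sum_eq_single (fun k : Fin n => ω (k : ℕ))]
    · have : ω ∈ C (fun k : Fin n => ω (k : ℕ)) := fun k => rfl
      simp [Set.indicator_of_mem this, hg]
    · intro η _ hne
      have : ω ∉ C η := by
        intro hmem
        exact hne (funext fun k => (hmem k).symm)
      simp [Set.indicator_of_notMem this]
    · intro h; exact absurd (Finset.mem_univ _) h
  have hg_int : Integrable g μ := by
    rw [show g = fun ω => ∑ η : Fin n → Bool,
        (C η).indicator (fun _ => Real.log (bcCnt lam η)) ω from funext hg_eq]
    exact integrable_finset_sum _ fun η _ => (integrable_const _).indicator (hCmeas η)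
  -- value of ∫ g
  have hg_val : ∫ ω, g ω ∂μ
      = (1/2:ℝ) ^ n * ∑ η : Fin n → Bool, Real.log (bcCnt lam η) := by
    rw [show (fun ω => g ω) = fun ω => ∑ η : Fin n → Bool,
        (C η).indicator (fun _ => Real.log (bcCnt lam η)) ω from funext hg_eq]
    rw [integral_finset_sum _ fun η _ => (integrable_const _).indicator (hCmeas η)]
    have : ∀ η : Fin n → Bool,
        ∫ ω, (C η).indicator (fun _ => Real.log (bcCnt lam η)) ω ∂μ
          = (1/2:ℝ) ^ n * Real.log (bcCnt lam η) := by
      intro η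
      rw [integral_indicator_const _ (hCmeas η)]
      have := hμ n η
      rw [hC]
      simp only [this, smul_eq_mul]
      congr 1
      rw [measureReal_def, this, ENNReal.toReal_pow]
      norm_num
    rw [Finset.sum_congr rfl (fun η _ => this η), ← Finset.mul_sum]
  -- pointwise bounds on β
  have hβ_lb : ∀ ω, bcCnt lam (fun k : Fin n => ω (k : ℕ)) ≤ bcBeta lam n (bcPi lam ω) :=
    fun ω => bcCnt_le_beta _ (bc_tail hlam₀ hlam₂ n ω)
  have hβ_pos : ∀ ω, 1 ≤ bcBeta lam n (bcPi lam ω) :=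
    fun ω => le_trans (one_le_bcCnt lam _) (hβ_lb ω)
  -- measurability of the integrand
  have hπ : Measurable (bcPi lam) := by
    apply measurable_of_tendsto_metrizable
      (f := fun N ω => ∑ k ∈ Finset.range N, bsign (ω k) * lam ^ k)
    · intro N
      exact Finset.measurable_sum _ fun k _ =>
        ((measurable_of_countable bsign).comp (measurable_pi_apply k)).mul_const _
    · rw [tendsto_pi_nhds]
      intro ω
      exact (bc_summable hlam₀ hlam₂ ω).hasSum.tendsto_sum_nat
  have hβmeas : Measurable fun x : ℝ => (bcBeta lam n x : ℝ) := by
    have : (fun x : ℝ => (bcBeta lam n x : ℝ))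
        = fun x => ∑ η : Fin n → Bool,
            if |x - bcSum lam η| ≤ lam ^ n / (1 - lam) then (1:ℝ) else 0 := by
      funext x
      rw [bcBeta_eq, Finset.card_filter]
      push_cast
      rfl
    rw [this]
    apply Finset.measurable_sum
    intro η _
    apply Measurable.ite _ measurable_const measurable_const
    exact measurableSet_le ((measurable_id.sub_const _).abs) measurable_const
  have hF_meas : Measurable fun ω => Real.log (bcBeta lam n (bcPi lam ω)) :=
    (hβmeas.comp hπ).log
  have hF_int : Integrable (fun ω => Real.log (bcBeta lam n (bcPi lam ω))) μ := by
    apply Integrable.mono' (integrable_const ((n : ℝ) * Real.log 2))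
      hF_meas.aestronglyMeasurable
    apply Filter.Eventually.of_forall
    intro ω
    have h1 : (1:ℝ) ≤ (bcBeta lam n (bcPi lam ω) : ℝ) := by exact_mod_cast hβ_pos ω
    rw [Real.norm_eq_abs, abs_of_nonneg (Real.log_nonneg h1)]
    calc Real.log (bcBeta lam n (bcPi lam ω))
        ≤ Real.log ((2:ℝ) ^ n) := by
          apply Real.log_le_log (by linarith)
          exact_mod_cast bcBeta_le lam n (bcPi lam ω)
      _ = (n : ℝ) * Real.log 2 := by rw [Real.log_pow]
  -- compare integrals
  have hmono : ∫ ω, g ω ∂μ ≤ ∫ ω, Real.log (bcBeta lam n (bcPi lam ω)) ∂μ := by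
    apply integral_mono hg_int hF_int
    intro ω
    have h1 : (1:ℝ) ≤ (bcCnt lam (fun k : Fin n => ω (k : ℕ)) : ℝ) := by
      exact_mod_cast one_le_bcCnt lam _
    apply Real.log_le_log (by linarith)
    exact_mod_cast hβ_lb ω
  refine le_trans ?_ hmono
  rw [hg_val]
  have hkey := sum_log_bcCnt lam n
  have := mul_le_mul_of_nonneg_left hkey (by positivity : (0:ℝ) ≤ (1/2:ℝ) ^ n)
  calc (n : ℝ) * Real.log 2 -
        Real.log ((Finset.image (bcSum lam) (Finset.univ : Finset (Fin n → Bool))).card)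
      = (1/2:ℝ) ^ n * ((2:ℝ) ^ n * ((n : ℝ) * Real.log 2 -
          Real.log ((Finset.image (bcSum lam)
            (Finset.univ : Finset (Fin n → Bool))).card))) := by
        rw [← mul_assoc]
        norm_num [← mul_pow]
    _ ≤ (1/2:ℝ) ^ n * ∑ η : Fin n → Bool, Real.log (bcCnt lam η) := this

end
end

section
/- Let I = {1,…,m}, let 0 = k₀ < k₁ < … < k_p = m, and let S = {φ_1,…,φ_m} be injective contractions of ℝ^d such that φ_j = φ_{k_i} whenever k_{i−1} < j ≤ k_i (for 1 ≤ i ≤ p), and such that the images φ_{k_1}(Λ), …, φ_{k_p}(Λ) of the limit set Λ are pairwise disjoint. Then the limit lim_{n→∞} (1/n) ∫_{Σ_I⁺} log β_n(π(ω)) dμ⁺_max(ω) exists and equals (1/m)·[k₁ log k₁ + (k₂−k₁) log(k₂−k₁) + … + (k_p−k_{p−1}) log(k_p−k_{p−1})]; that is, the topological overlap number of S is o(S) = exp of this quantity. -/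
open MeasureTheory Filter

noncomputable section

/-- Composition `φ_{η 0} ∘ φ_{η 1} ∘ … ∘ φ_{η (n-1)}` of the maps of an iterated function
system along a finite word `η`. -/
def comps {α E : Type*} (φ : α → E → E) {n : ℕ} (η : Fin n → α) : E → E :=
  (List.ofFn fun k => φ (η k)).foldr (· ∘ ·) id

/-- `β_n(x)`: the number of words `(η_1,…,η_n) ∈ I^n` with
`x ∈ φ_{η_1}∘…∘φ_{η_n}(Λ)`. -/
def ifsBeta {m : ℕ} {E : Type*} (φ : Fin m → E → E) (Λ : Set E) (n : ℕ) (x : E) : ℕ :=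
  Set.ncard {η : Fin n → Fin m | x ∈ comps φ η '' Λ}

/-- `μ` is the uniform Bernoulli measure on `I^ℕ` (`|I| = m`): every cylinder of
length `n` has measure `(1/m)^n`. This is the measure of maximal entropy for the shift. -/
def IsUniformBernoulli (m : ℕ) (μ : Measure (ℕ → Fin m)) : Prop :=
  ∀ (n : ℕ) (η : Fin n → Fin m),
    μ {ω | ∀ k : Fin n, ω (k : ℕ) = η k} = (1 / (m : ENNReal)) ^ n

/-- The system `{φ_i, i ∈ I}` consists of injective contractions, with nonempty compact
limit set `Λ = ⋃_i φ_i(Λ)`, and `π` is the canonical (continuous) coding map onto `Λ`. -/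
structure IsIFSSetup {m d : ℕ} (φ : Fin m → EuclideanSpace ℝ (Fin d) → EuclideanSpace ℝ (Fin d))
    (Λ : Set (EuclideanSpace ℝ (Fin d))) (π : (ℕ → Fin m) → EuclideanSpace ℝ (Fin d)) : Prop where
  inj : ∀ i, Function.Injective (φ i)
  contr : ∀ i, ∃ r : NNReal, r < 1 ∧ LipschitzWith r (φ i)
  compact : IsCompact Λ
  nonempty : Λ.Nonempty
  selfSimilar : Λ = ⋃ i, φ i '' Λ
  pi_continuous : Continuous π
  pi_mem : ∀ ω, π ω ∈ Λ
  pi_eq : ∀ ω, π ω = φ (ω 0) (π fun k => ω (k + 1))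

lemma blk_exists_aux {p : ℕ} (k : Fin (p + 1) → ℕ) (hk0 : k 0 = 0)
    (t : Fin (p + 1)) : ∀ j : ℕ, j < k t → ∃ i : Fin p, k i.castSucc ≤ j ∧ j < k i.succ := by
  induction t using Fin.induction with
  | zero => intro j hj; rw [hk0] at hj; omega
  | succ i ih =>
    intro j hj
    by_cases h : k i.castSucc ≤ j
    · exact ⟨i, h, hj⟩
    · exact ih j (lt_of_not_ge h)

lemma blk_unique_aux {p : ℕ} {k : Fin (p + 1) → ℕ} (hkmono : StrictMono k)
    {i i' : Fin p} {j : ℕ} (h1 : k i.castSucc ≤ j) (h2 : j < k i.succ)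
    (h1' : k i'.castSucc ≤ j) (h2' : j < k i'.succ) : i = i' := by
  by_contra hne
  rcases lt_or_gt_of_ne hne with h | h
  · have hle : k i.succ ≤ k i'.castSucc := hkmono.monotone (by
      simp only [Fin.le_def, Fin.val_succ, Fin.coe_castSucc]; exact h)
    omega
  · have hle : k i'.succ ≤ k i.castSucc := hkmono.monotone (by
      simp only [Fin.le_def, Fin.val_succ, Fin.coe_castSucc]; exact h)
    omega

lemma comps_zero {α E : Type*} (φ : α → E → E) (η : Fin 0 → α) : comps φ η = id := by
  simp [comps]

lemma comps_cons {α E : Type*} (φ : α → E → E) {n : ℕ} (a : α) (η : Fin n → α) :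
    comps φ (Fin.cons a η) = φ a ∘ comps φ η := by
  simp [comps, List.ofFn_succ]

lemma cons_inj {m n : ℕ} : Function.Injective
    (fun x : Fin m × (Fin n → Fin m) => Fin.cons x.1 x.2 : _ → Fin (n+1) → Fin m) := by
  rintro ⟨a, η⟩ ⟨b, η'⟩ h
  simp only at h
  have h0 := congrFun h 0
  simp only [Fin.cons_zero] at h0
  have ht : η = η' := by
    funext q
    have := congrFun h q.succ
    simpa using this
  simp [h0, ht]

/-- Exact overlaps in blocks: if `0 = k₀ < k₁ < … < k_p = m`, the maps `φ_j` coincide within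
each block `k_{i-1} < j ≤ k_i` (here `0`-indexed: `k_{i-1} ≤ j < k_i`), and images of the
distinct blocks are pairwise disjoint, then the topological overlap number of `S` is
`o(S) = exp((1/m) Σ_i (k_i − k_{i-1}) log(k_i − k_{i-1}))`. -/
theorem overlap_number_exact_blocks {m d p : ℕ}
    (φ : Fin m → EuclideanSpace ℝ (Fin d) → EuclideanSpace ℝ (Fin d))
    (Λ : Set (EuclideanSpace ℝ (Fin d))) (π : (ℕ → Fin m) → EuclideanSpace ℝ (Fin d))
    (hS : IsIFSSetup φ Λ π)
    (k : Fin (p + 1) → ℕ) (hk0 : k 0 = 0) (hkm : k (Fin.last p) = m) (hkmono : StrictMono k)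
    (hblock : ∀ i : Fin p, ∀ j j' : Fin m,
      k i.castSucc ≤ (j : ℕ) → (j : ℕ) < k i.succ →
      k i.castSucc ≤ (j' : ℕ) → (j' : ℕ) < k i.succ → φ j = φ j')
    (hdisj : ∀ i i' : Fin p, i ≠ i' → ∀ j j' : Fin m,
      k i.castSucc ≤ (j : ℕ) → (j : ℕ) < k i.succ →
      k i'.castSucc ≤ (j' : ℕ) → (j' : ℕ) < k i'.succ →
      Disjoint (φ j '' Λ) (φ j' '' Λ))
    (μ : Measure (ℕ → Fin m)) [IsProbabilityMeasure μ] (hμ : IsUniformBernoulli m μ) :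
    Tendsto (fun n : ℕ => (1 / (n : ℝ)) * ∫ ω, Real.log (ifsBeta φ Λ n (π ω)) ∂μ) atTop
      (nhds ((1 / (m : ℝ)) *
        ∑ i : Fin p, ((k i.succ - k i.castSucc : ℕ) : ℝ) *
          Real.log ((k i.succ - k i.castSucc : ℕ) : ℝ))) := by
  classical
  -- basic facts
  have hm : m ≠ 0 := by
    rintro rfl
    obtain ⟨x, hx⟩ := hS.nonempty
    rw [hS.selfSimilar] at hx
    obtain ⟨i, -⟩ := Set.mem_iUnion.mp hx
    exact i.elim0
  -- block function
  choose blk hblk1 hblk2 using fun j : Fin m =>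
    blk_exists_aux k hk0 (Fin.last p) (j : ℕ) (hkm ▸ j.isLt)
  set bsize : Fin m → ℕ := fun a => k (blk a).succ - k (blk a).castSucc with hbsize
  have hblk_iff : ∀ (a : Fin m) (i : Fin p),
      blk a = i ↔ (k i.castSucc ≤ (a : ℕ) ∧ (a : ℕ) < k i.succ) := by
    intro a i
    constructor
    · rintro rfl; exact ⟨hblk1 a, hblk2 a⟩
    · rintro ⟨h1, h2⟩; exact blk_unique_aux hkmono (hblk1 a) (hblk2 a) h1 h2
  have hbpos : ∀ a : Fin m, 0 < bsize a := fun a =>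
    Nat.sub_pos_of_lt (hkmono (Fin.castSucc_lt_succ (i := blk a)))
  -- subsets
  have hsub : ∀ i : Fin m, φ i '' Λ ⊆ Λ := by
    intro i
    have h := Set.subset_iUnion (fun i => φ i '' Λ) i
    rwa [← hS.selfSimilar] at h
  have hcomps_sub : ∀ {n : ℕ} (η : Fin n → Fin m), comps φ η '' Λ ⊆ Λ := by
    intro n
    induction n with
    | zero => intro η; rw [comps_zero]; simp
    | succ n ih =>
      intro η
      rw [← Fin.cons_self_tail η, comps_cons, Set.image_comp]
      exact (Set.image_mono (ih _)).trans (hsub _)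
  -- key recursion for membership
  have key : ∀ (ω : ℕ → Fin m) (n : ℕ) (η : Fin (n + 1) → Fin m),
      π ω ∈ comps φ η '' Λ ↔
      (blk (η 0) = blk (ω 0) ∧ π (fun t => ω (t + 1)) ∈ comps φ (Fin.tail η) '' Λ) := by
    intro ω n η
    have hx : π ω = φ (ω 0) (π fun t => ω (t + 1)) := hS.pi_eq ω
    have himg : comps φ η '' Λ = φ (η 0) '' (comps φ (Fin.tail η) '' Λ) := by
      conv_lhs => rw [← Fin.cons_self_tail η, comps_cons, Set.image_comp]
    constructor
    · intro h
      rw [himg] at h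
      have hxin : π ω ∈ φ (η 0) '' Λ := Set.image_mono (hcomps_sub _) h
      have hxin' : π ω ∈ φ (ω 0) '' Λ := by
        rw [hx]; exact Set.mem_image_of_mem _ (hS.pi_mem _)
      have heq : blk (η 0) = blk (ω 0) := by
        by_contra hne
        exact Set.disjoint_left.mp
          (hdisj _ _ hne (η 0) (ω 0) (hblk1 _) (hblk2 _) (hblk1 _) (hblk2 _)) hxin hxin'
      refine ⟨heq, ?_⟩
      have hφeq : φ (η 0) = φ (ω 0) := by
        apply hblock (blk (ω 0)) (η 0) (ω 0)
        · rw [← heq]; exact hblk1 _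
        · rw [← heq]; exact hblk2 _
        · exact hblk1 _
        · exact hblk2 _
      rw [hφeq] at h
      obtain ⟨y, hy, hyx⟩ := h
      rw [hx] at hyx
      rwa [hS.inj (ω 0) hyx] at hy
    · rintro ⟨heq, h⟩
      have hφeq : φ (η 0) = φ (ω 0) := by
        apply hblock (blk (ω 0)) (η 0) (ω 0)
        · rw [← heq]; exact hblk1 _
        · rw [← heq]; exact hblk2 _
        · exact hblk1 _
        · exact hblk2 _
      rw [himg, hφeq, hx]
      exact Set.mem_image_of_mem _ h
  -- cardinality of blocks
  have hcard_block : ∀ i : Fin p,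
      (Finset.univ.filter fun a : Fin m => blk a = i).card = k i.succ - k i.castSucc := by
    intro i
    have hle : k i.succ ≤ m := hkm ▸ hkmono.monotone (Fin.le_last _)
    rw [← Nat.card_Ico (k i.castSucc) (k i.succ)]
    apply Finset.card_bij (fun (a : Fin m) _ => (a : ℕ))
    · intro a ha
      rw [Finset.mem_filter] at ha
      rw [Finset.mem_Ico]
      exact (hblk_iff a i).mp ha.2
    · intro a _ b _ h
      exact Fin.val_injective h
    · intro x hx
      rw [Finset.mem_Ico] at hx
      refine ⟨⟨x, lt_of_lt_of_le hx.2 hle⟩, ?_, rfl⟩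
      rw [Finset.mem_filter]
      exact ⟨Finset.mem_univ _, (hblk_iff _ i).mpr hx⟩
  have hncard_block : ∀ i : Fin p, Nat.card {a : Fin m | blk a = i} = k i.succ - k i.castSucc := by
    intro i
    rw [Nat.card_eq_fintype_card, ← hcard_block i]
    simp [Fintype.card_subtype]
  -- the product formula for β
  have hbeta : ∀ (n : ℕ) (ω : ℕ → Fin m),
      ifsBeta φ Λ n (π ω) = ∏ t : Fin n, bsize (ω (t : ℕ)) := by
    intro n
    induction n with
    | zero =>
      intro ω
      have : {η : Fin 0 → Fin m | π ω ∈ comps φ η '' Λ} = Set.univ := by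
        ext η
        simp [comps_zero, hS.pi_mem]
      rw [ifsBeta, this]
      simp [Set.ncard_univ]
    | succ n ih =>
      intro ω
      have hset : {η : Fin (n + 1) → Fin m | π ω ∈ comps φ η '' Λ} =
          (fun x : Fin m × (Fin n → Fin m) => Fin.cons x.1 x.2) ''
            ({a : Fin m | blk a = blk (ω 0)} ×ˢ
             {η' : Fin n → Fin m | π (fun t => ω (t + 1)) ∈ comps φ η' '' Λ}) := by
        ext η
        simp only [Set.mem_image, Set.mem_prod, Set.mem_setOf_eq]
        constructor
        · intro h
          obtain ⟨h1, h2⟩ := (key ω n η).mp h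
          exact ⟨(η 0, Fin.tail η), ⟨h1, h2⟩, Fin.cons_self_tail η⟩
        · rintro ⟨⟨a, η'⟩, ⟨h1, h2⟩, rfl⟩
          apply (key ω n _).mpr
          simpa [Fin.tail_cons] using ⟨h1, h2⟩
      rw [ifsBeta, hset, Set.ncard_image_of_injective _ cons_inj]
      rw [← Nat.card_coe_set_eq]
      rw [Nat.card_congr (Equiv.Set.prod _ _), Nat.card_prod]
      rw [hncard_block (blk (ω 0))]
      rw [Nat.card_coe_set_eq]
      have := ih (fun t => ω (t + 1))
      rw [ifsBeta] at this
      rw [this]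
      rw [Fin.prod_univ_succ]
      refine congrArg₂ (· * ·) rfl ?_
      exact Finset.prod_congr rfl fun t _ => by simp [Fin.val_succ]
  -- integration
  set f : Fin m → ℝ := fun a => Real.log (bsize a) with hf
  have hmeasC : ∀ (t : ℕ) (a : Fin m), MeasurableSet {ω' : ℕ → Fin m | ω' t = a} := by
    intro t a
    have h : {ω' : ℕ → Fin m | ω' t = a} = (fun ω' : ℕ → Fin m => ω' t) ⁻¹' {a} := rfl
    rw [h]
    exact measurable_pi_apply t (measurableSet_singleton a)
  have hμcyl : ∀ (t : ℕ) (a : Fin m), μ {ω' : ℕ → Fin m | ω' t = a} = 1 / (m : ENNReal) := by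
    intro t a
    have hset : {ω' : ℕ → Fin m | ω' t = a} =
        ⋃ η : Fin t → Fin m, {ω : ℕ → Fin m | ∀ kk : Fin (t + 1), ω (kk : ℕ) = (Fin.snoc η a : Fin (t + 1) → Fin m) kk} := by
      ext ω
      simp only [Set.mem_setOf_eq, Set.mem_iUnion]
      constructor
      · intro h
        refine ⟨fun q => ω (q : ℕ), fun kk => ?_⟩
        induction kk using Fin.lastCases with
        | last => simpa using h
        | cast q => simp
      · rintro ⟨η, hη⟩
        have := hη (Fin.last t)
        simpa using this
    have hcylmeas : ∀ η : Fin t → Fin m,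
        MeasurableSet {ω : ℕ → Fin m | ∀ kk : Fin (t + 1), ω (kk : ℕ) = (Fin.snoc η a : Fin (t + 1) → Fin m) kk} := by
      intro η
      have h : {ω : ℕ → Fin m | ∀ kk : Fin (t + 1), ω (kk : ℕ) = (Fin.snoc η a : Fin (t + 1) → Fin m) kk} =
          ⋂ kk : Fin (t + 1), {ω : ℕ → Fin m | ω (kk : ℕ) = (Fin.snoc η a : Fin (t + 1) → Fin m) kk} := by
        ext ω; simp [Set.mem_iInter]
      rw [h]
      exact MeasurableSet.iInter fun kk => hmeasC (kk : ℕ) ((Fin.snoc η a : Fin (t + 1) → Fin m) kk)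
    have hdis : Pairwise (Function.onFun Disjoint fun η : Fin t → Fin m =>
        {ω : ℕ → Fin m | ∀ kk : Fin (t + 1), ω (kk : ℕ) = (Fin.snoc η a : Fin (t + 1) → Fin m) kk}) := by
      intro η η' hne
      rw [Function.onFun, Set.disjoint_left]
      intro ω h1 h2
      apply hne
      funext q
      have e1 := h1 q.castSucc
      have e2 := h2 q.castSucc
      rw [Fin.snoc_castSucc] at e1 e2
      rw [← e1, ← e2]
    rw [hset, measure_iUnion hdis hcylmeas, tsum_fintype]
    have : ∀ η : Fin t → Fin m,
        μ {ω : ℕ → Fin m | ∀ kk : Fin (t + 1), ω (kk : ℕ) = (Fin.snoc η a : Fin (t + 1) → Fin m) kk} =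
        (1 / (m : ENNReal)) ^ (t + 1) := fun η => hμ (t + 1) (Fin.snoc η a)
    rw [Finset.sum_congr rfl (fun η _ => this η), Finset.sum_const, Finset.card_univ]
    have hcard : Fintype.card (Fin t → Fin m) = m ^ t := by simp
    rw [hcard, nsmul_eq_mul]
    have hm' : (m : ENNReal) ≠ 0 := Nat.cast_ne_zero.mpr hm
    push_cast
    rw [one_div, pow_succ, ← mul_assoc, ← mul_pow,
      ENNReal.mul_inv_cancel hm' (ENNReal.natCast_ne_top m), one_pow, one_mul]
  -- pointwise decomposition of the coordinate function into indicators
  have hind : ∀ t : ℕ, (fun ω : ℕ → Fin m => f (ω t)) =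
      fun ω => ∑ a : Fin m, Set.indicator {ω' : ℕ → Fin m | ω' t = a} (fun _ => f a) ω := by
    intro t
    funext ω
    rw [Finset.sum_eq_single (ω t)]
    · rw [Set.indicator_of_mem (by simp : ω ∈ {ω' : ℕ → Fin m | ω' t = ω t})]
    · intro b _ hb
      exact Set.indicator_of_notMem (fun h => hb (Set.mem_setOf_eq ▸ h).symm) _
    · intro h
      exact absurd (Finset.mem_univ _) h
  have hintg : ∀ t : ℕ, Integrable (fun ω : ℕ → Fin m => f (ω t)) μ := by
    intro t
    rw [hind t]
    exact integrable_finset_sum _ fun a _ => (integrable_const (f a)).indicator (hmeasC t a)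
  have hInt : ∀ t : ℕ, ∫ ω, f (ω t) ∂μ = (1 / (m : ℝ)) * ∑ a : Fin m, f a := by
    intro t
    rw [hind t, integral_finset_sum _ fun a _ => (integrable_const (f a)).indicator (hmeasC t a)]
    have : ∀ a : Fin m,
        ∫ ω, Set.indicator {ω' : ℕ → Fin m | ω' t = a} (fun _ => f a) ω ∂μ
          = (1 / (m : ℝ)) * f a := by
      intro a
      rw [integral_indicator_const (f a) (hmeasC t a), measureReal_def, hμcyl t a, smul_eq_mul]
      congr 1
      rw [one_div, one_div, ENNReal.toReal_inv]
      simp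
    rw [Finset.sum_congr rfl fun a _ => this a, ← Finset.mul_sum]
  -- the integral formula
  have hIntegral : ∀ n : ℕ,
      ∫ ω, Real.log (ifsBeta φ Λ n (π ω)) ∂μ = (n : ℝ) * ((1 / (m : ℝ)) * ∑ a : Fin m, f a) := by
    intro n
    have heq : (fun ω : ℕ → Fin m => Real.log (ifsBeta φ Λ n (π ω))) =
        fun ω => ∑ t : Fin n, f (ω (t : ℕ)) := by
      funext ω
      rw [hbeta n ω, Nat.cast_prod,
        Real.log_prod (s := (Finset.univ : Finset (Fin n))) (fun t _ => Nat.cast_ne_zero.mpr (hbpos (ω (t : ℕ))).ne')]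
    rw [heq, integral_finset_sum (μ := μ) (f := fun (t : Fin n) (ω : ℕ → Fin m) => f (ω (t : ℕ)))
      Finset.univ (fun t _ => hintg (t : ℕ))]
    rw [Finset.sum_congr rfl (fun (t : Fin n) _ => hInt (t : ℕ)), Finset.sum_const,
      Finset.card_univ, Fintype.card_fin, nsmul_eq_mul]
  -- the sum identity
  have hsum : ∑ a : Fin m, f a =
      ∑ i : Fin p, ((k i.succ - k i.castSucc : ℕ) : ℝ) *
        Real.log ((k i.succ - k i.castSucc : ℕ) : ℝ) := by
    rw [← Finset.sum_fiberwise_of_maps_to (g := blk) (fun a _ => Finset.mem_univ (blk a)) f]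
    apply Finset.sum_congr rfl
    intro i _
    have : ∀ a ∈ Finset.univ.filter fun a : Fin m => blk a = i,
        f a = Real.log ((k i.succ - k i.castSucc : ℕ) : ℝ) := by
      intro a ha
      rw [Finset.mem_filter] at ha
      rw [hf]
      simp only [hbsize, ha.2]
    rw [Finset.sum_congr rfl this, Finset.sum_const, hcard_block i, nsmul_eq_mul]
  -- conclude
  apply Tendsto.congr' (f₁ := fun _ : ℕ => (1 / (m : ℝ)) *
      ∑ i : Fin p, ((k i.succ - k i.castSucc : ℕ) : ℝ) *
        Real.log ((k i.succ - k i.castSucc : ℕ) : ℝ))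
  · filter_upwards [eventually_ge_atTop 1] with n hn
    have hn' : (n : ℝ) ≠ 0 := Nat.cast_ne_zero.mpr (by omega)
    have h2 : (1 / (n : ℝ)) * (n : ℝ) = 1 := by
      rw [one_div, inv_mul_cancel₀ hn']
    rw [hIntegral n, hsum, ← mul_assoc, h2, one_mul]
  · exact tendsto_const_nhds


end
end
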